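/- If u_k is a bounded sequence in H^1_0(B) (unit disk, gradient norm ≤ 1) such that for every sequence j_k ∈ ℕ the rescaled symmetric rearrangements r ↦ j_k^{-1/2} u_k^*(r^{j_k}) converge to zero in measure on B, then sup_{r∈(0,1)} u_k^*(r)/(1 + log(1/r))^{1/2} → 0, i.e., u_k → 0 in exp L^2. -/

import Mathlib

open MeasureTheory Metric Set Filter

noncomputable abbrev E2 := EuclideanSpace ℝ (Fin 2)

/-- The radial profile `u^*` of the symmetric decreasing rearrangement of `u`:
`u^*(r) = inf { s ≥ 0 : |{|u| > s}| ≤ π r² }`. -/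
noncomputable def rearr (u : E2 → ℝ) (r : ℝ) : ℝ :=
  sInf {s : ℝ | 0 ≤ s ∧ (volume {x : E2 | s < |u x|}).toReal ≤ Real.pi * r ^ 2}

lemma rearrSet_nonempty (u : E2 → ℝ) (hmeas : Measurable u)
    (hsupp : tsupport u ⊆ closedBall (0 : E2) 1) {r : ℝ} (hr : 0 < r) :
    {s : ℝ | 0 ≤ s ∧ (volume {x : E2 | s < |u x|}).toReal ≤ Real.pi * r ^ 2}.Nonempty := by
  have hcpos : 0 < Real.pi * r ^ 2 := mul_pos Real.pi_pos (by positivity)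
  set S : ℕ → Set E2 := fun n => {x | (n : ℝ) < |u x|} with hS
  have hSm : ∀ n, MeasurableSet (S n) := fun n =>
    measurableSet_lt measurable_const hmeas.abs
  have hsub : ∀ n, S n ⊆ closedBall (0 : E2) 1 := by
    intro n x hx
    apply hsupp
    apply subset_tsupport
    intro h0
    simp only [hS, mem_setOf_eq, h0, abs_zero] at hx
    exact absurd hx (not_lt.mpr (Nat.cast_nonneg n))
  have hfin : volume (S 0) ≠ ⊤ :=
    ((measure_mono (hsub 0)).trans_lt (measure_closedBall_lt_top)).ne
  have hanti : Antitone S := by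
    intro n m hnm x hx
    exact lt_of_le_of_lt (show ((n:ℝ)) ≤ (m:ℝ) from Nat.cast_le.mpr hnm) hx
  have hinter : ⋂ n, S n = ∅ := by
    ext x
    simp only [mem_iInter, mem_empty_iff_false, iff_false, hS, mem_setOf_eq, not_forall, not_lt]
    obtain ⟨n, hn⟩ := exists_nat_gt |u x|
    exact ⟨n, hn.le⟩
  have htend : Tendsto (volume ∘ S) atTop (nhds 0) := by
    have := tendsto_measure_iInter_atTop (μ := volume) (fun n => (hSm n).nullMeasurableSet)
      hanti ⟨0, hfin⟩
    rwa [hinter, measure_empty] at this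
  have : ∀ᶠ n in atTop, (volume ∘ S) n < ENNReal.ofReal (Real.pi * r ^ 2) :=
    htend.eventually (Iio_mem_nhds (by simp [ENNReal.ofReal_pos, hcpos]))
  obtain ⟨n, hn⟩ := this.exists
  exact ⟨(n : ℝ), Nat.cast_nonneg n, ENNReal.toReal_le_of_le_ofReal hcpos.le hn.le⟩

lemma rearr_nonneg (u : E2 → ℝ) (r : ℝ) : 0 ≤ rearr u r :=
  Real.sInf_nonneg fun _ hs => hs.1

lemma rearr_anti (u : E2 → ℝ) (hmeas : Measurable u)
    (hsupp : tsupport u ⊆ closedBall (0 : E2) 1) {a b : ℝ} (ha : 0 < a) (hab : a ≤ b) :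
    rearr u b ≤ rearr u a := by
  apply csInf_le_csInf
  · exact ⟨0, fun s hs => hs.1⟩
  · exact rearrSet_nonempty u hmeas hsupp ha
  · intro s hs
    refine ⟨hs.1, hs.2.trans ?_⟩
    have : a ^ 2 ≤ b ^ 2 := by nlinarith
    nlinarith [Real.pi_pos]

theorem convergence_in_measure_implies_expL2
    (u : ℕ → E2 → ℝ)
    (hmeas : ∀ k, Measurable (u k))
    (hsupp : ∀ k, tsupport (u k) ⊆ closedBall (0 : E2) 1)
    (henergy : ∀ k, ∫ x in ball (0 : E2) 1, ‖fderiv ℝ (u k) x‖ ^ 2 ≤ 1)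
    (hmeasure : ∀ j : ℕ → ℕ, (∀ k, 1 ≤ j k) →
      TendstoInMeasure (volume.restrict (ball (0 : E2) 1))
        (fun k => fun z : E2 => ((j k : ℝ)) ^ (-(1:ℝ)/2) * rearr (u k) (‖z‖ ^ (j k)))
        atTop (fun _ => (0:ℝ))) :
    Tendsto
      (fun k => ⨆ r : Set.Ioo (0:ℝ) 1, rearr (u k) r / Real.sqrt (1 + Real.log (1/(r:ℝ))))
      atTop (nhds 0) := by
  by_contra hcon
  haveI : Nonempty ↥(Set.Ioo (0:ℝ) 1) := ⟨⟨1/2, by norm_num⟩⟩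
  set F : ℕ → ℝ := fun k =>
    ⨆ r : Set.Ioo (0:ℝ) 1, rearr (u k) r / Real.sqrt (1 + Real.log (1/(r:ℝ))) with hF
  have hFnn : ∀ k, 0 ≤ F k := by
    intro k
    exact Real.iSup_nonneg fun r => div_nonneg (rearr_nonneg _ _) (Real.sqrt_nonneg _)
  rw [Metric.tendsto_atTop] at hcon
  push_neg at hcon
  obtain ⟨ε, hε, hfreq⟩ := hcon
  -- positivity of 1 + log(1/r)
  have hlogpos : ∀ r : ℝ, r ∈ Set.Ioo (0:ℝ) 1 → 0 < Real.log (1 / r) := by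
    intro r hr
    apply Real.log_pos
    rw [lt_div_iff₀ hr.1]
    linarith [hr.2]
  -- from ε ≤ F k, extract a witness radius
  have key : ∀ k, ε ≤ F k → ∃ r : ℝ, r ∈ Set.Ioo (0:ℝ) 1 ∧
      ε / 2 * Real.sqrt (1 + Real.log (1 / r)) < rearr (u k) r := by
    intro k hk
    by_cases hb : BddAbove (Set.range fun r : Set.Ioo (0:ℝ) 1 =>
        rearr (u k) r / Real.sqrt (1 + Real.log (1/(r:ℝ))))
    · have hlt : ε / 2 < F k := lt_of_lt_of_le (by linarith) hk
      obtain ⟨r, hr⟩ := exists_lt_of_lt_ciSup (hF ▸ hlt)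
      have hs : 0 < Real.sqrt (1 + Real.log (1 / (r:ℝ))) :=
        Real.sqrt_pos.mpr (by linarith [hlogpos r r.2])
      refine ⟨r, r.2, ?_⟩
      rwa [lt_div_iff₀ hs] at hr
    · exfalso
      have h0 := Real.iSup_of_not_bddAbove hb
      have hk' : ε ≤ (0:ℝ) := h0 ▸ hk
      linarith
  classical
  -- choose radii
  let P : ℕ → Prop := fun k => ∃ r : ℝ, r ∈ Set.Ioo (0:ℝ) 1 ∧
      ε / 2 * Real.sqrt (1 + Real.log (1 / r)) < rearr (u k) r
  let r0 : ℕ → ℝ := fun k => if h : P k then h.choose else 1/2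
  have hr0mem : ∀ k, r0 k ∈ Set.Ioo (0:ℝ) 1 := by
    intro k
    by_cases h : P k
    · simp only [r0, dif_pos h]; exact h.choose_spec.1
    · simp only [r0, dif_neg h]; norm_num
  have hr0good : ∀ k, P k →
      ε / 2 * Real.sqrt (1 + Real.log (1 / r0 k)) < rearr (u k) (r0 k) := by
    intro k h
    simp only [r0, dif_pos h]
    exact h.choose_spec.2
  let j : ℕ → ℕ := fun k => max 1 ⌈Real.log (1 / r0 k)⌉₊
  have hj1 : ∀ k, 1 ≤ j k := fun k => le_max_left _ _
  have htm := hmeasure j hj1 (ENNReal.ofReal (ε/2)) (ENNReal.ofReal_pos.mpr (by linarith))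
  -- the annulus A
  set A : Set E2 := ball 0 (Real.exp (-1)) \ closedBall 0 4⁻¹ with hA
  have hexp4 : Real.exp 1 < 4 := by
    have := Real.exp_one_lt_d9; linarith
  have hAopen : IsOpen A := isOpen_ball.sdiff isClosed_closedBall
  have hAne : A.Nonempty := by
    obtain ⟨x, hx⟩ := exists_norm_eq E2 (le_of_lt (show (0:ℝ) < 3/10 by norm_num))
    refine ⟨x, ?_, ?_⟩
    · have h9 := Real.exp_one_lt_d9
      rw [mem_ball_zero_iff, hx, Real.exp_neg]
      rw [show (3:ℝ)/10 = (10/3)⁻¹ by norm_num]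
      exact inv_strictAnti₀ (by positivity) (by linarith)
    · simp only [mem_closedBall_zero_iff, hx, not_le]
      norm_num
  have hApos : 0 < volume A := hAopen.measure_pos volume hAne
  have hAsub : A ⊆ ball (0 : E2) 1 := by
    intro z hz
    rw [mem_ball_zero_iff]
    calc ‖z‖ < Real.exp (-1) := mem_ball_zero_iff.mp hz.1
    _ < 1 := Real.exp_lt_one_iff.mpr (by norm_num)
  -- main lower bound
  have main : ∀ k, P k →
      volume A ≤ (volume.restrict (ball (0 : E2) 1))
        {x : E2 | ε/2 ≤ dist (((j k : ℝ)) ^ (-(1:ℝ)/2) * rearr (u k) (‖x‖ ^ (j k))) 0} := by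
    intro k hPk
    set L : ℝ := Real.log (1 / r0 k) with hL
    have hrk := hr0mem k
    have hLpos : 0 < L := hlogpos _ hrk
    have hjk : j k = ⌈L⌉₊ := max_eq_right (Nat.one_le_ceil_iff.mpr hLpos)
    have hjL : L ≤ (j k : ℝ) := by rw [hjk]; exact Nat.le_ceil L
    have hjL' : (j k : ℝ) ≤ 1 + L := by
      rw [hjk]; linarith [Nat.ceil_lt_add_one hLpos.le]
    have hexpL : Real.exp (-L) = r0 k := by
      rw [hL, one_div, Real.log_inv, neg_neg, Real.exp_log hrk.1]
    have hsub : A ⊆ {x : E2 | ε/2 ≤ dist (((j k : ℝ)) ^ (-(1:ℝ)/2) * rearr (u k) (‖x‖ ^ (j k))) 0} := by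
      intro z hz
      obtain ⟨hz1, hz2⟩ := hz
      rw [mem_ball_zero_iff] at hz1
      rw [mem_closedBall_zero_iff] at hz2
      push_neg at hz2
      have hznorm : (0:ℝ) < ‖z‖ := lt_trans (by norm_num) hz2
      -- ρ ≤ r0 k
      have hρpos : 0 < ‖z‖ ^ (j k) := pow_pos hznorm _
      have hρle : ‖z‖ ^ (j k) ≤ r0 k := by
        calc ‖z‖ ^ (j k) ≤ Real.exp (-1) ^ (j k) :=
              pow_le_pow_left₀ (norm_nonneg z) hz1.le _
        _ = Real.exp ((j k : ℝ) * (-1)) := (Real.exp_nat_mul _ _).symm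
        _ ≤ Real.exp (-L) := Real.exp_le_exp.mpr (by linarith)
        _ = r0 k := hexpL
      have hmono : rearr (u k) (r0 k) ≤ rearr (u k) (‖z‖ ^ (j k)) :=
        rearr_anti (u k) (hmeas k) (hsupp k) hρpos hρle
      have hlow : ε / 2 * Real.sqrt (1 + L) < rearr (u k) (‖z‖ ^ (j k)) :=
        lt_of_lt_of_le (hr0good k hPk) hmono
      -- rpow part
      have hrw : ((j k : ℝ)) ^ (-(1:ℝ)/2) = (Real.sqrt (j k))⁻¹ := by
        rw [neg_div, Real.rpow_neg (Nat.cast_nonneg _), Real.sqrt_eq_rpow]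
      have hjpos : (0:ℝ) < (j k : ℝ) := by exact_mod_cast (hj1 k)
      have hsqj : 0 < Real.sqrt (j k) := Real.sqrt_pos.mpr hjpos
      have hsq1L : 0 < Real.sqrt (1 + L) := Real.sqrt_pos.mpr (by linarith)
      have hsqle : Real.sqrt (j k) ≤ Real.sqrt (1 + L) := Real.sqrt_le_sqrt hjL'
      have hinvle : (Real.sqrt (1 + L))⁻¹ ≤ (Real.sqrt (j k))⁻¹ :=
        inv_anti₀ hsqj hsqle
      have hval : ε / 2 ≤ ((j k : ℝ)) ^ (-(1:ℝ)/2) * rearr (u k) (‖z‖ ^ (j k)) := by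
        rw [hrw]
        calc ε / 2 = (ε / 2 * Real.sqrt (1 + L)) * (Real.sqrt (1 + L))⁻¹ := by
              field_simp
        _ ≤ rearr (u k) (‖z‖ ^ (j k)) * (Real.sqrt (1 + L))⁻¹ :=
              mul_le_mul_of_nonneg_right hlow.le (by positivity)
        _ ≤ rearr (u k) (‖z‖ ^ (j k)) * (Real.sqrt (j k))⁻¹ :=
              mul_le_mul_of_nonneg_left hinvle (rearr_nonneg _ _)
        _ = (Real.sqrt (j k))⁻¹ * rearr (u k) (‖z‖ ^ (j k)) := mul_comm _ _
      rw [mem_setOf_eq, dist_zero_right]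
      exact hval.trans (le_abs_self _)
    calc volume A = (volume.restrict (ball (0:E2) 1)) A := by
          rw [Measure.restrict_apply hAopen.measurableSet, inter_eq_left.mpr hAsub]
    _ ≤ _ := measure_mono hsub
  -- contradiction
  have hev : ∀ᶠ k in atTop, (volume.restrict (ball (0 : E2) 1))
      {x : E2 | ε/2 ≤ dist (((j k : ℝ)) ^ (-(1:ℝ)/2) * rearr (u k) (‖x‖ ^ (j k))) 0}
      < volume A := by
    refine (htm.eventually (Iio_mem_nhds hApos)).mono fun k hk => ?_
    refine lt_of_le_of_lt (measure_mono ?_) hk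
    intro x hx
    simp only [mem_setOf_eq] at hx ⊢
    rw [edist_dist]
    exact ENNReal.ofReal_le_ofReal hx
  rw [eventually_atTop] at hev
  obtain ⟨N, hN⟩ := hev
  obtain ⟨n, hnN, hn⟩ := hfreq N
  rw [Real.dist_eq, sub_zero, abs_of_nonneg (hFnn n)] at hn
  have hPn : P n := key n hn
  exact absurd (main n hPn) (not_le.mpr (hN n hnN))
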